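/- Let (Ω, P) be a probability space, let y : ℤ → Ω → ℝ be a wide-sense stationary process with autocorrelation R : ℤ → ℝ, and let (B_t)_{t∈ℤ} be mutually independent Bernoulli random variables with success probability p ∈ (0,1], independent of the process y. Suppose u : ℤ → Ω → ℝ is a process with each u_t square-integrable, satisfying almost surely u_t = y_t on the event {B_t = 1} and u_t = u_{t−1} on the event {B_t = 0}, and such that for each t, almost surely u_t = y_{t − τ_t} where τ_t = min{k ≥ 0 : B_{t−k} = 1}. Assume Σ_{k≥0} (1−p)^k |R(k)| < ∞. Then for every t ∈ ℤ, E[u_t · u_0] = (1−p)^{|t|} · R(0) + Σ_{j=1}^{|t|} Σ_{k=j}^{∞} p² · (1−p)^{|t|+k−2j} · R(k), where the double sum is interpreted as 0 when t = 0. (This is the packet-drop autocorrelation formula, equation (18) of the paper.) -/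

import Mathlib

open MeasureTheory ProbabilityTheory

lemma pktAux_l2mul {α : Type*} [MeasurableSpace α] {μ : Measure α} {f g : α → ℝ}
    (hf : MemLp f 2 μ) (hg : MemLp g 2 μ) : Integrable (fun x => f x * g x) μ := by
  have h1 := hf.integrable_sq
  have h2 := hg.integrable_sq
  refine Integrable.mono' (((h1.add h2).const_mul (1/2)))
    (hf.aestronglyMeasurable.mul hg.aestronglyMeasurable)
    (Filter.Eventually.of_forall fun x => ?_)
  rw [Real.norm_eq_abs]
  simp only [Pi.add_apply]
  rcases abs_cases (f x * g x) with ⟨h, _⟩ | ⟨h, _⟩ <;>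
    nlinarith [sq_nonneg (f x - g x), sq_nonneg (f x + g x)]

lemma pktAux_sInf {S : Set ℕ} {b : ℕ} (h1 : b ∈ S) (h2 : ∀ k < b, k ∉ S) : sInf S = b := by
  refine le_antisymm (Nat.sInf_le h1) ?_
  by_contra h
  push_neg at h
  exact h2 _ h (Nat.sInf_mem ⟨b, h1⟩)

lemma pktAux_prodIcc (p q : ℝ) (a c : ℤ) (h : a ≤ c) (w : ℤ → Bool)
    (hw : ∀ i ∈ Finset.Icc a c, (w i = true ↔ i = a)) :
    ∏ i ∈ Finset.Icc a c, (if w i then p else q) = p * q ^ (c - a).toNat := by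
  have ha : a ∈ Finset.Icc a c := Finset.mem_Icc.2 ⟨le_rfl, h⟩
  rw [← Finset.mul_prod_erase _ _ ha, if_pos ((hw a ha).2 rfl)]
  congr 1
  have hcongr : ∀ i ∈ (Finset.Icc a c).erase a, (if w i then p else q) = q := by
    intro i hi
    have hia := Finset.ne_of_mem_erase hi
    have hi' := Finset.mem_of_mem_erase hi
    have hwi : w i = false := by
      cases hwi : w i
      · rfl
      · exact absurd ((hw i hi').1 hwi) hia
    simp [hwi]
  rw [Finset.prod_congr rfl hcongr, Finset.prod_const, Finset.card_erase_of_mem ha,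
    Int.card_Icc]
  congr 1
  omega

theorem stmt15 {Ω : Type*} [MeasureSpace Ω] [IsProbabilityMeasure (volume : Measure Ω)]
    (y : ℤ → Ω → ℝ) (hymeas : ∀ t, Measurable (y t))
    (hyL2 : ∀ t, MemLp (y t) 2 volume)
    (R : ℤ → ℝ) (hWSS : ∀ t k : ℤ, ∫ ω, y (t + k) ω * y t ω = R k)
    (p : ℝ) (hp0 : 0 < p) (hp1 : p ≤ 1)
    (B : ℤ → Ω → Bool) (hBmeas : ∀ t, Measurable (B t))
    (hBp : ∀ t, (volume {ω | B t ω = true}).toReal = p)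
    (hBiid : iIndepFun B volume)
    (hBy : IndepFun (fun ω => fun t : ℤ => B t ω)
      (fun ω => fun t : ℤ => y t ω) volume)
    (u : ℤ → Ω → ℝ) (humeas : ∀ t, Measurable (u t))
    (huL2 : ∀ t, MemLp (u t) 2 volume)
    (hrecur : ∀ t : ℤ, ∀ᵐ ω ∂volume,
      (B t ω = true → u t ω = y t ω) ∧ (B t ω = false → u t ω = u (t - 1) ω))
    (τ : ℤ → Ω → ℕ) (hτ : ∀ t ω, τ t ω = sInf {k : ℕ | B (t - (k : ℤ)) ω = true})
    (hlast : ∀ t : ℤ, ∀ᵐ ω ∂volume, u t ω = y (t - (τ t ω : ℤ)) ω)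
    (hsum : Summable fun k : ℕ => (1 - p) ^ k * |R (k : ℤ)|) :
    ∀ t : ℤ, ∫ ω, u t ω * u 0 ω =
      (1 - p) ^ t.natAbs * R 0 +
        ∑ j ∈ Finset.Icc 1 t.natAbs,
          ∑' k : ℕ, p ^ 2 * (1 - p) ^ (t.natAbs - j + k) * R ((j : ℤ) + (k : ℤ)) := by
  classical
  have huint : ∀ a c : ℤ, Integrable (fun ω => u a ω * u c ω) volume :=
    fun a c => pktAux_l2mul (huL2 a) (huL2 c)
  have hyint : ∀ a c : ℤ, Integrable (fun ω => y a ω * y c ω) volume :=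
    fun a c => pktAux_l2mul (hyL2 a) (hyL2 c)
  have hBfalse : ∀ i : ℤ, (volume {ω | B i ω = false}).toReal = 1 - p := by
    intro i
    have hms : MeasurableSet {ω | B i ω = true} :=
      (hBmeas i) (measurableSet_singleton true)
    have hc : {ω | B i ω = false} = {ω | B i ω = true}ᶜ := by
      ext ω; simp
    rw [hc, measure_compl hms (measure_ne_top _ _), measure_univ,
      ENNReal.toReal_sub_of_le prob_le_one (by simp), ENNReal.toReal_one, hBp i]
  set Ev : Finset ℤ → (ℤ → Bool) → Set Ω := fun s v => ⋂ i ∈ s, {ω | B i ω = v i} with hEv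
  have hmemEv : ∀ s v ω, ω ∈ Ev s v ↔ ∀ i ∈ s, B i ω = v i := by
    intro s v ω; simp [hEv, Set.mem_iInter]
  have hEvmeas : ∀ s v, MeasurableSet (Ev s v) := by
    intro s v
    exact MeasurableSet.biInter s.countable_toSet
      (fun i _ => (hBmeas i) (measurableSet_singleton (v i)))
  have hEvprob : ∀ s v, (volume (Ev s v)).toReal = ∏ i ∈ s, (if v i then p else 1 - p) := by
    intro s v
    simp only [hEv]
    have hsets : (⋂ i ∈ s, {ω | B i ω = v i}) = ⋂ i ∈ s, B i ⁻¹' {v i} := rfl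
    rw [hsets, hBiid.meas_biInter (fun i _ => ⟨{v i}, measurableSet_singleton _, rfl⟩)]
    rw [ENNReal.toReal_prod]
    refine Finset.prod_congr rfl fun i _ => ?_
    cases hvi : v i
    · simp only [hvi, Bool.false_eq_true, if_false]
      exact hBfalse i
    · simp only [hvi, if_true]
      exact hBp i
  have hEvint : ∀ (s : Finset ℤ) (v : ℤ → Bool) (a c : ℤ),
      ∫ ω in Ev s v, y a ω * y c ω
        = (volume (Ev s v)).toReal * ∫ ω, y a ω * y c ω := by
    intro s v a c
    have hSm := hEvmeas s v
    set T : Set (ℤ → Bool) := ⋂ i ∈ s, (fun f : ℤ → Bool => f i) ⁻¹' {v i} with hTdef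
    have hT : MeasurableSet T :=
      MeasurableSet.biInter s.countable_toSet fun i _ =>
        (measurable_pi_apply i) (measurableSet_singleton (v i))
    have hpre : (fun ω => fun t : ℤ => B t ω) ⁻¹' T = Ev s v := by
      ext ω; simp [hTdef, hEv, Set.mem_iInter]
    have hφ : Measurable (Set.indicator T (fun _ => (1:ℝ))) :=
      measurable_const.indicator hT
    have hψ : Measurable (fun f : ℤ → ℝ => f a * f c) :=
      (measurable_pi_apply a).mul (measurable_pi_apply c)
    have hind := hBy.comp hφ hψ
    have hXeq : (Set.indicator T (fun _ => (1:ℝ))) ∘ (fun ω => fun t : ℤ => B t ω)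
        = Set.indicator (Ev s v) (fun _ => (1:ℝ)) := by
      rw [← hpre]
      ext ω
      by_cases h : (fun t : ℤ => B t ω) ∈ T <;>
        simp [Set.indicator_apply, Set.mem_preimage, Function.comp, h]
    rw [hXeq] at hind
    have h2 : ((fun f : ℤ → ℝ => f a * f c) ∘ (fun ω => fun t : ℤ => y t ω))
        = fun ω => y a ω * y c ω := rfl
    rw [h2] at hind
    have hXint : Integrable (Set.indicator (Ev s v) (fun _ => (1:ℝ))) volume :=
      (integrable_const (1:ℝ)).indicator hSm
    have hmul := hind.integral_mul_eq_mul_integral hXint.aestronglyMeasurable (hyint a c).aestronglyMeasurable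
    have h3 : (Set.indicator (Ev s v) (fun _ => (1:ℝ)) * fun ω => y a ω * y c ω)
        = Set.indicator (Ev s v) (fun ω => y a ω * y c ω) := by
      ext ω; by_cases h : ω ∈ Ev s v <;> simp [Set.indicator_apply, h]
    rw [h3, integral_indicator hSm] at hmul
    rw [hmul, integral_indicator_const (1:ℝ) hSm]
    simp [smul_eq_mul, measureReal_def]
  have key : ∀ (t0 : ℤ) (n : ℕ), ∫ ω, u (t0 + (n:ℤ)) ω * u t0 ω =
      (1 - p) ^ n * R 0 + ∑ j ∈ Finset.Icc 1 n, ∑' k : ℕ,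
        p ^ 2 * (1 - p) ^ (n - j + k) * R ((j : ℤ) + (k : ℤ)) := by
    intro t0 n
    set s1 : ℕ → ℕ → Finset ℤ :=
      fun j b => Finset.Icc (t0 + j) (t0 + n) ∪ Finset.Icc (t0 - b) t0 with hs1
    set v1 : ℕ → ℕ → ℤ → Bool := fun j b i => decide (i = t0 + j ∨ i = t0 - b) with hv1
    set sD : ℕ → Finset ℤ := fun b => Finset.Icc (t0 - b) (t0 + n) with hsD
    set vD : ℕ → ℤ → Bool := fun b i => decide (i = t0 - b) with hvD
    have hmem1 : ∀ j b ω, ω ∈ Ev (s1 j b) (v1 j b) ↔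
        ∀ i : ℤ, ((t0 + j ≤ i ∧ i ≤ t0 + n) ∨ (t0 - b ≤ i ∧ i ≤ t0)) →
          B i ω = decide (i = t0 + j ∨ i = t0 - b) := by
      intro j b ω
      rw [hmemEv]
      simp only [hs1, hv1, Finset.mem_union, Finset.mem_Icc]
    have hmemD : ∀ b ω, ω ∈ Ev (sD b) (vD b) ↔
        ∀ i : ℤ, (t0 - b ≤ i ∧ i ≤ t0 + n) → B i ω = decide (i = t0 - b) := by
      intro b ω
      rw [hmemEv]
      simp only [hsD, hvD, Finset.mem_Icc]
    -- clash lemmas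
    have clashDD : ∀ b b' ω, b < b' → ω ∈ Ev (sD b) (vD b) → ω ∈ Ev (sD b') (vD b') → False := by
      intro b b' ω hbb h1 h2
      have e1 := (hmemD b ω).1 h1 (t0 - b) (by omega)
      have e2 := (hmemD b' ω).1 h2 (t0 - b) (by omega)
      rw [decide_eq_true (show (t0 - (b:ℤ)) = t0 - b from rfl)] at e1
      rw [decide_eq_false (by omega : ¬ (t0 - (b:ℤ)) = t0 - (b':ℤ))] at e2
      rw [e1] at e2
      exact absurd e2 (by simp)
    have clashDC : ∀ b j' b' ω, 1 ≤ j' → j' ≤ n →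
        ω ∈ Ev (sD b) (vD b) → ω ∈ Ev (s1 j' b') (v1 j' b') → False := by
      intro b j' b' ω hj1 hj2 h1 h2
      have e1 := (hmemD b ω).1 h1 (t0 + j') (by omega)
      have e2 := (hmem1 j' b' ω).1 h2 (t0 + j') (Or.inl (by omega))
      rw [decide_eq_false (by omega : ¬ (t0 + (j':ℤ)) = t0 - (b:ℤ))] at e1
      rw [decide_eq_true (Or.inl rfl)] at e2
      rw [e1] at e2
      exact Bool.false_ne_true e2
    have clash_lt : ∀ j b j' b' ω, 1 ≤ j → j < j' → j' ≤ n →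
        ω ∈ Ev (s1 j b) (v1 j b) → ω ∈ Ev (s1 j' b') (v1 j' b') → False := by
      intro j b j' b' ω hj1 hlt hj2 h1 h2
      have e1 := (hmem1 j b ω).1 h1 (t0 + j') (Or.inl (by omega))
      have e2 := (hmem1 j' b' ω).1 h2 (t0 + j') (Or.inl (by omega))
      rw [decide_eq_false (by omega : ¬((t0 + (j':ℤ)) = t0 + (j:ℤ) ∨ (t0 + (j':ℤ)) = t0 - (b:ℤ)))] at e1
      rw [decide_eq_true (Or.inl rfl)] at e2
      rw [e1] at e2
      exact Bool.false_ne_true e2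
    have clash_bb : ∀ j b b' ω, 1 ≤ j → j ≤ n → b < b' →
        ω ∈ Ev (s1 j b) (v1 j b) → ω ∈ Ev (s1 j b') (v1 j b') → False := by
      intro j b b' ω hj1 hj2 hbb h1 h2
      have e1 := (hmem1 j b ω).1 h1 (t0 - b) (Or.inr (by omega))
      have e2 := (hmem1 j b' ω).1 h2 (t0 - b) (Or.inr (by omega))
      rw [decide_eq_true (Or.inr rfl)] at e1
      rw [decide_eq_false (by omega : ¬((t0 - (b:ℤ)) = t0 + (j:ℤ) ∨ (t0 - (b:ℤ)) = t0 - (b':ℤ)))] at e2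
      rw [e1] at e2
      exact absurd e2 (by simp)
    have clashCC : ∀ j b j' b' ω, 1 ≤ j → j ≤ n → 1 ≤ j' → j' ≤ n → ¬(j = j' ∧ b = b') →
        ω ∈ Ev (s1 j b) (v1 j b) → ω ∈ Ev (s1 j' b') (v1 j' b') → False := by
      intro j b j' b' ω hj1 hj2 hj1' hj2' hne h1 h2
      rcases Nat.lt_trichotomy j j' with h | h | h
      · exact clash_lt j b j' b' ω hj1 h hj2' h1 h2
      · subst h
        rcases Nat.lt_trichotomy b b' with hb | hb | hb
        · exact clash_bb j b b' ω hj1 hj2 hb h1 h2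
        · exact hne ⟨rfl, hb⟩
        · exact clash_bb j b' b ω hj1 hj2 hb h2 h1
      · exact clash_lt j' b' j b ω hj1' h hj2 h2 h1
    -- τ values on the pieces
    have hτC : ∀ j b ω, 1 ≤ j → j ≤ n → ω ∈ Ev (s1 j b) (v1 j b) →
        τ (t0 + n) ω = n - j ∧ τ t0 ω = b := by
      intro j b ω hj1 hj2 hω
      have hval := (hmem1 j b ω).1 hω
      constructor
      · rw [hτ]
        apply pktAux_sInf
        · show B (t0 + (n:ℤ) - ((n - j : ℕ) : ℤ)) ω = true
          rw [show t0 + (n:ℤ) - ((n - j : ℕ) : ℤ) = t0 + j by omega,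
            hval (t0 + j) (Or.inl ⟨le_rfl, by omega⟩)]
          exact decide_eq_true (Or.inl rfl)
        · intro k hk hkmem
          have hkm : B (t0 + (n:ℤ) - (k:ℤ)) ω = true := hkmem
          rw [hval (t0 + (n:ℤ) - k) (Or.inl ⟨by omega, by omega⟩),
            decide_eq_false (by omega)] at hkm
          exact Bool.false_ne_true hkm
      · rw [hτ]
        apply pktAux_sInf
        · show B (t0 - (b : ℕ) : ℤ) ω = true
          rw [hval (t0 - b) (Or.inr ⟨le_rfl, by omega⟩)]
          exact decide_eq_true (Or.inr rfl)
        · intro k hk hkmem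
          have hkm : B (t0 - (k:ℤ)) ω = true := hkmem
          rw [hval (t0 - (k:ℤ)) (Or.inr ⟨by omega, by omega⟩),
            decide_eq_false (by omega)] at hkm
          exact Bool.false_ne_true hkm
    have hτD : ∀ b ω, ω ∈ Ev (sD b) (vD b) →
        τ (t0 + n) ω = n + b ∧ τ t0 ω = b := by
      intro b ω hω
      have hval := (hmemD b ω).1 hω
      constructor
      · rw [hτ]
        apply pktAux_sInf
        · show B (t0 + (n:ℤ) - ((n + b : ℕ) : ℤ)) ω = true
          rw [show t0 + (n:ℤ) - ((n + b : ℕ) : ℤ) = t0 - b by omega,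
            hval (t0 - b) ⟨le_rfl, by omega⟩]
          exact decide_eq_true rfl
        · intro k hk hkmem
          have hkm : B (t0 + (n:ℤ) - (k:ℤ)) ω = true := hkmem
          rw [hval (t0 + (n:ℤ) - k) ⟨by omega, by omega⟩,
            decide_eq_false (by omega)] at hkm
          exact Bool.false_ne_true hkm
      · rw [hτ]
        apply pktAux_sInf
        · show B (t0 - (b : ℕ) : ℤ) ω = true
          rw [hval (t0 - b) ⟨le_rfl, by omega⟩]
          exact decide_eq_true rfl
        · intro k hk hkmem
          have hkm : B (t0 - (k:ℤ)) ω = true := hkmem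
          rw [hval (t0 - (k:ℤ)) ⟨by omega, by omega⟩,
            decide_eq_false (by omega)] at hkm
          exact Bool.false_ne_true hkm
    -- integral over each piece
    have hintC : ∀ j b, 1 ≤ j → j ≤ n →
        ∫ ω in Ev (s1 j b) (v1 j b), u (t0 + (n:ℤ)) ω * u t0 ω
          = p ^ 2 * (1 - p) ^ (n - j + b) * R ((j:ℤ) + (b:ℤ)) := by
      intro j b hj1 hj2
      have hae : ∫ ω in Ev (s1 j b) (v1 j b), u (t0 + (n:ℤ)) ω * u t0 ω
          = ∫ ω in Ev (s1 j b) (v1 j b), y (t0 + (j:ℤ)) ω * y (t0 - (b:ℤ)) ω := by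
        refine setIntegral_congr_ae (hEvmeas _ _) ?_
        filter_upwards [hlast (t0 + n), hlast t0] with ω h1 h2 hω
        obtain ⟨ha, hb⟩ := hτC j b ω hj1 hj2 hω
        rw [h1, h2, ha, hb, show t0 + (n:ℤ) - ((n - j : ℕ) : ℤ) = t0 + j by omega]
      rw [hae, hEvint]
      have hprobC : (volume (Ev (s1 j b) (v1 j b))).toReal = p ^ 2 * (1 - p) ^ (n - j + b) := by
        rw [hEvprob]
        simp only [hs1, hv1]
        rw [Finset.prod_union (Finset.disjoint_left.2 (fun i hi1 hi2 => by
          simp only [Finset.mem_Icc] at hi1 hi2; omega))]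
        rw [pktAux_prodIcc p (1-p) _ _ (by omega) _ (fun i hi => by
          simp only [Finset.mem_Icc] at hi
          simp only [decide_eq_true_eq]
          omega)]
        rw [pktAux_prodIcc p (1-p) _ _ (by omega) _ (fun i hi => by
          simp only [Finset.mem_Icc] at hi
          simp only [decide_eq_true_eq]
          omega)]
        rw [show ((t0 + (n:ℤ)) - (t0 + (j:ℤ))).toNat = n - j by omega,
          show (t0 - (t0 - (b:ℤ))).toNat = b by omega, pow_add]
        ring
      have hR : ∫ ω, y (t0 + (j:ℤ)) ω * y (t0 - (b:ℤ)) ω = R ((j:ℤ) + (b:ℤ)) := by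
        have h := hWSS (t0 - b) ((j:ℤ) + b)
        rw [show t0 - (b:ℤ) + ((j:ℤ) + b) = t0 + j by ring] at h
        exact h
      rw [hprobC, hR]
    have hintD : ∀ b, ∫ ω in Ev (sD b) (vD b), u (t0 + (n:ℤ)) ω * u t0 ω
        = p * (1 - p) ^ (n + b) * R 0 := by
      intro b
      have hae : ∫ ω in Ev (sD b) (vD b), u (t0 + (n:ℤ)) ω * u t0 ω
          = ∫ ω in Ev (sD b) (vD b), y (t0 - (b:ℤ)) ω * y (t0 - (b:ℤ)) ω := by
        refine setIntegral_congr_ae (hEvmeas _ _) ?_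
        filter_upwards [hlast (t0 + n), hlast t0] with ω h1 h2 hω
        obtain ⟨ha, hb⟩ := hτD b ω hω
        rw [h1, h2, ha, hb, show t0 + (n:ℤ) - ((n + b : ℕ) : ℤ) = t0 - b by omega]
      rw [hae, hEvint]
      have hprobD : (volume (Ev (sD b) (vD b))).toReal = p * (1 - p) ^ (n + b) := by
        rw [hEvprob]
        simp only [hsD, hvD]
        rw [pktAux_prodIcc p (1-p) _ _ (by omega) _ (fun i hi => by
          simp only [decide_eq_true_eq])]
        rw [show ((t0 + (n:ℤ)) - (t0 - (b:ℤ))).toNat = n + b by omega]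
      have hR : ∫ ω, y (t0 - (b:ℤ)) ω * y (t0 - (b:ℤ)) ω = R 0 := by
        have h := hWSS (t0 - b) 0
        rw [add_zero] at h
        exact h
      rw [hprobD, hR]
    -- the null set
    have hN : volume (⋂ k : ℕ, {ω | B (t0 - (k:ℤ)) ω = false}) = 0 := by
      have hsub : ∀ m : ℕ, (⋂ k : ℕ, {ω | B (t0 - (k:ℤ)) ω = false})
          ⊆ Ev (Finset.Icc (t0 - m) t0) (fun _ => false) := by
        intro m ω hω
        rw [hmemEv]
        intro i hi
        rw [Finset.mem_Icc] at hi
        have h := Set.mem_iInter.1 hω (t0 - i).toNat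
        rw [show t0 - (((t0 - i).toNat : ℕ) : ℤ) = i by omega] at h
        exact h
      have hle : ∀ m : ℕ, (volume (⋂ k : ℕ, {ω | B (t0 - (k:ℤ)) ω = false})).toReal
          ≤ (1 - p) ^ (m + 1) := by
        intro m
        have h1 : (volume (⋂ k : ℕ, {ω | B (t0 - (k:ℤ)) ω = false})).toReal
            ≤ (volume (Ev (Finset.Icc (t0 - m) t0) fun _ => false)).toReal :=
          ENNReal.toReal_mono (measure_ne_top _ _) (measure_mono (hsub m))
        have h2 : (volume (Ev (Finset.Icc (t0 - (m:ℤ)) t0) fun _ => false)).toReal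
            = (1 - p) ^ (m + 1) := by
          rw [hEvprob]
          rw [Finset.prod_congr rfl (fun i _ => if_neg (by simp)), Finset.prod_const,
            Int.card_Icc, show ((t0 + 1 - (t0 - (m:ℤ)))).toNat = m + 1 by omega]
        rw [h2] at h1
        exact h1
      have htends : Filter.Tendsto (fun m : ℕ => (1 - p) ^ (m + 1)) Filter.atTop (nhds 0) := by
        have h0 : |1 - p| < 1 := by rw [abs_lt]; constructor <;> linarith
        exact (tendsto_pow_atTop_nhds_zero_of_abs_lt_one h0).comp
          (Filter.tendsto_add_atTop_nat 1)
      have h0 : (volume (⋂ k : ℕ, {ω | B (t0 - (k:ℤ)) ω = false})).toReal ≤ 0 :=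
        ge_of_tendsto' htends hle
      have h1 := le_antisymm h0 ENNReal.toReal_nonneg
      rcases (ENNReal.toReal_eq_zero_iff _).1 h1 with h | h
      · exact h
      · exact absurd h (measure_ne_top _ _)
    -- covering
    have hcov : ∀ ω, ω ∉ (⋂ k : ℕ, {ω | B (t0 - (k:ℤ)) ω = false}) →
        ω ∈ (⋃ b : ℕ, Ev (sD b) (vD b)) ∪
          (⋃ j ∈ Finset.Icc 1 n, ⋃ b : ℕ, Ev (s1 j b) (v1 j b)) := by
      intro ω hω
      simp only [Set.mem_iInter, Set.mem_setOf_eq, not_forall] at hω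
      obtain ⟨k0, hk0⟩ := hω
      rw [Bool.not_eq_false] at hk0
      have hKne : Set.Nonempty {k : ℕ | B (t0 - (k:ℤ)) ω = true} := ⟨k0, hk0⟩
      have hbmem : B (t0 - ((sInf {k : ℕ | B (t0 - (k:ℤ)) ω = true} : ℕ) : ℤ)) ω = true :=
        Nat.sInf_mem hKne
      set b := sInf {k : ℕ | B (t0 - (k:ℤ)) ω = true} with hbdef
      have hbmin : ∀ i : ℕ, i < b → B (t0 - (i:ℤ)) ω = false := by
        intro i hi
        have h' := Nat.notMem_of_lt_sInf (hbdef ▸ hi)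
        simp only [Set.mem_setOf_eq, Bool.not_eq_true] at h'
        exact h'
      by_cases hex : ∃ i : ℕ, i ∈ Finset.Icc 1 n ∧ B (t0 + (i:ℤ)) ω = true
      · right
        have hTne : ((Finset.Icc 1 n).filter (fun i : ℕ => B (t0 + (i:ℤ)) ω = true)).Nonempty := by
          obtain ⟨i, hi1, hi2⟩ := hex
          exact ⟨i, Finset.mem_filter.2 ⟨hi1, hi2⟩⟩
        set j := ((Finset.Icc 1 n).filter (fun i : ℕ => B (t0 + (i:ℤ)) ω = true)).max' hTne with hjdef
        have hjmem := Finset.max'_mem _ hTne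
        rw [← hjdef, Finset.mem_filter] at hjmem
        have hj1 : 1 ≤ j := (Finset.mem_Icc.1 hjmem.1).1
        have hj2 : j ≤ n := (Finset.mem_Icc.1 hjmem.1).2
        have hjmax : ∀ i, 1 ≤ i → i ≤ n → B (t0 + (i:ℤ)) ω = true → i ≤ j := by
          intro i hi1 hi2 hB
          exact Finset.le_max' _ i (Finset.mem_filter.2 ⟨Finset.mem_Icc.2 ⟨hi1, hi2⟩, hB⟩)
        refine Set.mem_iUnion.2 ⟨j, Set.mem_iUnion.2 ⟨Finset.mem_Icc.2 ⟨hj1, hj2⟩,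
          Set.mem_iUnion.2 ⟨b, ?_⟩⟩⟩
        rw [hmem1 j b ω]
        rintro i (⟨hi1, hi2⟩ | ⟨hi1, hi2⟩)
        · by_cases hij : i = t0 + j
          · rw [hij, decide_eq_true (Or.inl rfl)]
            exact hjmem.2
          · rw [decide_eq_false (by omega : ¬(i = t0 + (j:ℤ) ∨ i = t0 - (b:ℤ)))]
            by_contra hcon
            rw [Bool.not_eq_false] at hcon
            have hile : (i - t0).toNat ≤ j := by
              refine hjmax (i - t0).toNat (by omega) (by omega) ?_
              rw [show t0 + (((i - t0).toNat : ℕ) : ℤ) = i by omega]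
              exact hcon
            omega
        · by_cases hib : i = t0 - b
          · rw [hib, decide_eq_true (Or.inr rfl)]
            exact hbmem
          · rw [decide_eq_false (by omega : ¬(i = t0 + (j:ℤ) ∨ i = t0 - (b:ℤ)))]
            have h := hbmin (t0 - i).toNat (by omega)
            rw [show t0 - (((t0 - i).toNat : ℕ) : ℤ) = i by omega] at h
            exact h
      · left
        refine Set.mem_iUnion.2 ⟨b, ?_⟩
        rw [hmemD b ω]
        rintro i ⟨hi1, hi2⟩
        by_cases hib : i = t0 - b
        · rw [hib, decide_eq_true rfl]
          exact hbmem
        · rw [decide_eq_false hib]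
          rcases le_or_gt i t0 with hle | hgt
          · have h := hbmin (t0 - i).toNat (by omega)
            rw [show t0 - (((t0 - i).toNat : ℕ) : ℤ) = i by omega] at h
            exact h
          · push_neg at hex
            have h := hex (i - t0).toNat (Finset.mem_Icc.2 ⟨by omega, by omega⟩)
            rw [show t0 + (((i - t0).toNat : ℕ) : ℤ) = i by omega] at h
            cases hB : B i ω
            · rfl
            · exact absurd hB h
    -- assembling
    set UD : Set Ω := ⋃ b : ℕ, Ev (sD b) (vD b) with hUD
    set UC : Set Ω := ⋃ j ∈ Finset.Icc 1 n, ⋃ b : ℕ, Ev (s1 j b) (v1 j b) with hUC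
    have hUDmeas : MeasurableSet UD := MeasurableSet.iUnion fun b => hEvmeas _ _
    have hUCmeas : MeasurableSet UC :=
      MeasurableSet.iUnion fun j => MeasurableSet.iUnion fun _ =>
        MeasurableSet.iUnion fun b => hEvmeas _ _
    have hdisjDC : Disjoint UD UC := by
      rw [Set.disjoint_left]
      intro ω h1 h2
      obtain ⟨b, hb⟩ := Set.mem_iUnion.1 h1
      obtain ⟨j, hj⟩ := Set.mem_iUnion.1 h2
      obtain ⟨hjm, hj2⟩ := Set.mem_iUnion.1 hj
      obtain ⟨b', hb'⟩ := Set.mem_iUnion.1 hj2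
      obtain ⟨hjm1, hjm2⟩ := Finset.mem_Icc.1 hjm
      exact clashDC b j b' ω hjm1 hjm2 hb hb'
    have hsplit : ∫ ω, u (t0 + (n:ℤ)) ω * u t0 ω
        = (∫ ω in UD, u (t0 + (n:ℤ)) ω * u t0 ω)
          + ∫ ω in UC, u (t0 + (n:ℤ)) ω * u t0 ω := by
      have hUm : MeasurableSet (UD ∪ UC) := hUDmeas.union hUCmeas
      have hcompl : volume (UD ∪ UC)ᶜ = 0 := by
        refine measure_mono_null ?_ hN
        intro ω hωc
        by_contra h
        exact hωc (hcov ω h)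
      rw [← integral_add_compl hUm (huint _ _)]
      have hz : ∫ ω in (UD ∪ UC)ᶜ, u (t0 + (n:ℤ)) ω * u t0 ω = 0 := by
        rw [Measure.restrict_eq_zero.2 hcompl, integral_zero_measure]
      rw [hz, add_zero,
        setIntegral_union hdisjDC hUCmeas (huint _ _).integrableOn (huint _ _).integrableOn]
    have hUDval : ∫ ω in UD, u (t0 + (n:ℤ)) ω * u t0 ω = (1 - p) ^ n * R 0 := by
      rw [hUD, integral_iUnion (fun b => hEvmeas _ _) ?_ (huint _ _).integrableOn]
      · have h1 : ∀ b : ℕ, ∫ ω in Ev (sD b) (vD b), u (t0 + (n:ℤ)) ω * u t0 ω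
            = (p * (1 - p) ^ n * R 0) * (1 - p) ^ b := by
          intro b
          rw [hintD b, pow_add]
          ring
        rw [tsum_congr h1, tsum_mul_left,
          tsum_geometric_of_lt_one (by linarith) (by linarith),
          show (1 : ℝ) - (1 - p) = p by ring]
        field_simp
      · intro b b' hbb'
        rcases hbb'.lt_or_gt with h | h
        · exact Set.disjoint_left.2 fun ω h1 h2 => clashDD b b' ω h h1 h2
        · exact (Set.disjoint_left.2 fun ω h1 h2 => clashDD b' b ω h h1 h2).symm
    have hUCval : ∫ ω in UC, u (t0 + (n:ℤ)) ω * u t0 ω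
        = ∑ j ∈ Finset.Icc 1 n, ∑' k : ℕ,
            p ^ 2 * (1 - p) ^ (n - j + k) * R ((j:ℤ) + (k:ℤ)) := by
      rw [hUC, integral_biUnion_finset (Finset.Icc 1 n)
        (fun j _ => MeasurableSet.iUnion fun b => hEvmeas _ _) ?_
        (fun j _ => (huint _ _).integrableOn)]
      · refine Finset.sum_congr rfl fun j hj => ?_
        obtain ⟨hj1, hj2⟩ := Finset.mem_Icc.1 hj
        rw [integral_iUnion (fun b => hEvmeas _ _) ?_ (huint _ _).integrableOn]
        · exact tsum_congr fun b => hintC j b hj1 hj2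
        · intro b b' hbb'
          rcases hbb'.lt_or_gt with h | h
          · exact Set.disjoint_left.2 fun ω h1 h2 =>
              clashCC j b j b' ω hj1 hj2 hj1 hj2 (fun hc => hbb' hc.2) h1 h2
          · exact (Set.disjoint_left.2 fun ω h1 h2 =>
              clashCC j b' j b ω hj1 hj2 hj1 hj2 (fun hc => hbb' hc.2.symm) h1 h2).symm
      · intro j hj j' hj' hne
        simp only [Finset.coe_Icc, Set.mem_Icc] at hj hj'
        refine Set.disjoint_left.2 fun ω h1 h2 => ?_
        obtain ⟨b, hb⟩ := Set.mem_iUnion.1 h1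
        obtain ⟨b', hb'⟩ := Set.mem_iUnion.1 h2
        exact clashCC j b j' b' ω hj.1 hj.2 hj'.1 hj'.2 (fun hc => hne hc.1) hb hb'
    rw [hsplit, hUDval, hUCval]

  intro t
  rcases le_or_gt 0 t with ht | ht
  · have h := key 0 t.natAbs
    rw [zero_add] at h
    rw [show ((t.natAbs : ℤ)) = t from Int.natAbs_of_nonneg ht] at h
    exact h
  · have h := key t t.natAbs
    rw [show t + (t.natAbs : ℤ) = 0 from by omega] at h
    have hc : ∫ ω, u t ω * u 0 ω = ∫ ω, u 0 ω * u t ω := by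
      congr 1; funext ω; ring
    rw [hc]
    exact h
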